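/- Let n, k ≥ 1 be integers and let f : S(ℂⁿ) → ℝ^{2k+1} be a continuous map on the unit sphere of ℂⁿ with f(−v) = −f(v) for all v ∈ S(ℂⁿ). Then for any 2k+1 vectors w₀, …, w_{2k} ∈ S(ℂⁿ) there exist signs e₀, …, e_{2k} ∈ {+1, −1}, real numbers λ₀, …, λ_{2k} ≥ 0 with λ₀ + ⋯ + λ_{2k} = 1, and a complex number z with |z| = 1, such that Σ_{i=0}^{2k} λᵢ f(eᵢ·z·wᵢ) = 0, where eᵢ·z·wᵢ denotes scalar multiplication of the vector wᵢ by the complex scalar eᵢz. -/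

import Mathlib

open Metric

/-- Lemma 2.5 of the paper. For an odd continuous map
`f : S(ℂⁿ) → ℝ^{2k+1}` and any `2k+1` unit vectors `w₀, …, w_{2k}` in `ℂⁿ`, there are
signs `eᵢ ∈ {±1}`, convex coefficients `λᵢ` and a unit complex number `z` with
`∑ λᵢ f((eᵢ z) • wᵢ) = 0`. -/
theorem stmt6 (n k : ℕ) (hn : 1 ≤ n) (hk : 1 ≤ k)
    (f : EuclideanSpace ℂ (Fin n) → EuclideanSpace ℝ (Fin (2 * k + 1)))
    (hf : ContinuousOn f (sphere 0 1))
    (hodd : ∀ v ∈ sphere (0 : EuclideanSpace ℂ (Fin n)) 1, f (-v) = -f v)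
    (w : Fin (2 * k + 1) → EuclideanSpace ℂ (Fin n)) (hw : ∀ i, ‖w i‖ = 1) :
    ∃ (e : Fin (2 * k + 1) → ℝ) (lam : Fin (2 * k + 1) → ℝ) (z : ℂ),
      (∀ i, e i = 1 ∨ e i = -1) ∧ (∀ i, 0 ≤ lam i) ∧ (∑ i, lam i = 1) ∧ ‖z‖ = 1 ∧
      ∑ i, lam i • f (((e i : ℂ) * z) • w i) = 0 := by
  classical
  -- membership of scaled vectors in the sphere
  have hmem : ∀ (z : ℂ), ‖z‖ = 1 → ∀ j, (z • w j) ∈ sphere (0 : EuclideanSpace ℂ (Fin n)) 1 := by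
    intro z hz j
    simp [mem_sphere_zero_iff_norm, norm_smul, hz, hw j]
  -- the determinant function
  set M : ℝ → Matrix (Fin (2 * k + 1)) (Fin (2 * k + 1)) ℝ :=
    fun θ => Matrix.of fun i j => f (Complex.exp (θ * Complex.I) • w j) i with hM
  have hznorm : ∀ θ : ℝ, ‖Complex.exp (θ * Complex.I)‖ = 1 := fun θ =>
    Complex.norm_exp_ofReal_mul_I θ
  have hMcont : ContinuousOn (fun θ => (M θ).det) Set.univ := by
    have hMc : ContinuousOn M Set.univ := by
      apply continuousOn_pi.2
      intro i
      apply continuousOn_pi.2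
      intro j
      have hc1 : Continuous fun θ : ℝ => Complex.exp (θ * Complex.I) • w j := by
        fun_prop
      have h2 : ContinuousOn (fun θ : ℝ => f (Complex.exp (θ * Complex.I) • w j))
          Set.univ := by
        apply hf.comp hc1.continuousOn
        intro θ _
        exact hmem _ (hznorm θ) j
      exact (EuclideanSpace.proj i).continuous.comp_continuousOn h2
    exact continuous_id.matrix_det.comp_continuousOn hMc
  -- value at π is the negative of the value at 0
  have hMpi : M Real.pi = - M 0 := by
    funext i j
    have h1 : Complex.exp ((Real.pi : ℝ) * Complex.I) = -1 := Complex.exp_pi_mul_I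
    have h0 : Complex.exp ((0 : ℝ) * Complex.I) = 1 := by simp
    have hwj : w j ∈ sphere (0 : EuclideanSpace ℂ (Fin n)) 1 := by
      simp [mem_sphere_zero_iff_norm, hw j]
    simp only [hM, Matrix.of_apply, h1, h0, one_smul, Matrix.neg_apply]
    rw [show (-1 : ℂ) • w j = -(w j) by simp, hodd _ hwj]
    rfl
  have hdetpi : (M Real.pi).det = - (M 0).det := by
    rw [hMpi, Matrix.det_neg]
    have : Fintype.card (Fin (2 * k + 1)) = 2 * k + 1 := Fintype.card_fin _
    rw [this]
    have hodd' : Odd (2 * k + 1) := ⟨k, by ring⟩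
    rw [hodd'.neg_one_pow]
    ring
  -- intermediate value theorem: some θ with det = 0
  obtain ⟨θ, -, hθ⟩ : ∃ θ ∈ Set.uIcc (0 : ℝ) Real.pi, (M θ).det = 0 := by
    have hsub : ContinuousOn (fun θ => (M θ).det) (Set.uIcc (0 : ℝ) Real.pi) :=
      hMcont.mono (Set.subset_univ _)
    have h0mem : (0 : ℝ) ∈ Set.uIcc ((M 0).det) ((M Real.pi).det) := by
      rw [hdetpi]
      rcases le_or_gt 0 ((M 0).det) with h | h
      · exact Set.mem_uIcc.2 (Or.inr ⟨by linarith, h⟩)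
      · exact Set.mem_uIcc.2 (Or.inl ⟨by linarith, by linarith⟩)
    obtain ⟨θ, hθ1, hθ2⟩ := intermediate_value_uIcc hsub h0mem
    exact ⟨θ, hθ1, hθ2⟩
  set z : ℂ := Complex.exp (θ * Complex.I) with hz
  have hznorm1 : ‖z‖ = 1 := hznorm θ
  -- linear dependence
  obtain ⟨t, ht0, htker⟩ : ∃ t, t ≠ 0 ∧ (M θ).mulVec t = 0 :=
    (Matrix.exists_mulVec_eq_zero_iff).2 hθ
  -- normalize
  set s : ℝ := ∑ j, |t j| with hs
  have hspos : 0 < s := by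
    obtain ⟨j, hj⟩ : ∃ j, t j ≠ 0 := by
      by_contra h
      push_neg at h
      exact ht0 (funext h)
    exact Finset.sum_pos' (fun i _ => abs_nonneg _) ⟨j, Finset.mem_univ j, abs_pos.2 hj⟩
  refine ⟨fun j => if 0 ≤ t j then 1 else -1, fun j => |t j| / s, z, ?_, ?_, ?_, hznorm1, ?_⟩
  · intro j
    by_cases h : 0 ≤ t j <;> simp [h]
  · intro j
    positivity
  · rw [← Finset.sum_div]
    field_simp
    exact hs.symm
  · -- the main identity
    have hkey : ∀ j, (|t j| / s) • f ((Complex.ofReal (if 0 ≤ t j then (1:ℝ) else -1) * z) • w j)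
        = (t j / s) • f (z • w j) := by
      intro j
      by_cases h : 0 ≤ t j
      · rw [if_pos h, abs_of_nonneg h]
        norm_num
      · have hneg : t j < 0 := lt_of_not_ge h
        rw [if_neg h]
        have h1 : (Complex.ofReal (-1 : ℝ) * z) • w j = -(z • w j) := by
          push_cast
          rw [neg_one_mul, neg_smul]
        rw [h1, hodd _ (hmem z hznorm1 j), abs_of_neg hneg, smul_neg, ← neg_smul]
        congr 1
        ring
    rw [show (∑ i, (|t i| / s) • f ((Complex.ofReal (if 0 ≤ t i then (1:ℝ) else -1) * z) • w i))
        = ∑ j, (t j / s) • f (z • w j) from Finset.sum_congr rfl fun j _ => hkey j]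
    -- reduce to the kernel equation
    have hsum : ∑ j, (t j) • f (z • w j) = 0 := by
      ext i
      have := congrFun htker i
      simp only [Matrix.mulVec, dotProduct, hM, Matrix.of_apply, Pi.zero_apply] at this
      calc (∑ j, (t j) • f (z • w j)) i = ∑ j, t j * f (z • w j) i := by
            rw [WithLp.ofLp_sum, Finset.sum_apply]
            rfl
        _ = 0 := by
            rw [← this]
            exact Finset.sum_congr rfl fun j _ => mul_comm _ _
    have : ∑ j, (t j / s) • f (z • w j) = (s⁻¹ : ℝ) • ∑ j, (t j) • f (z • w j) := by
      rw [Finset.smul_sum]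
      refine Finset.sum_congr rfl fun j _ => ?_
      rw [smul_smul, div_eq_inv_mul]
    rw [this, hsum, smul_zero]
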